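/- Let A be an n×n real matrix such that all complex eigenvalues of A have nonzero imaginary part (A has no real eigenvalues). Then Id - t·A is invertible for every real t, and the solution X(t) = A·(Id - t·A)⁻¹ of X' = X·X is defined for all real t (an eternal solution). -/

import Mathlib

open Matrix

attribute [local instance] Matrix.linftyOpNormedRing Matrix.linftyOpNormedAlgebra

/-- If all complex eigenvalues of the real matrix `A` have nonzero imaginary part, then
`Id - t • A` is invertible for all real `t` and `X(t) = A (Id - tA)⁻¹` is an eternal
solution of `X' = X X`. -/
theorem eternal_of_no_real_eigenvalue {n : ℕ} (A : Matrix (Fin n) (Fin n) ℝ)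
    (h : ∀ mu ∈ spectrum ℂ (A.map (Complex.ofReal)), mu.im ≠ 0) :
    (∀ t : ℝ, IsUnit (1 - t • A)) ∧
      ∀ t : ℝ, HasDerivAt (fun s : ℝ => A * (1 - s • A)⁻¹)
        ((A * (1 - t • A)⁻¹) * (A * (1 - t • A)⁻¹)) t := by
  have hunit : ∀ t : ℝ, IsUnit (1 - t • A) := by
    intro t
    rcases eq_or_ne t 0 with rfl | ht
    · simp
    -- show det ≠ 0
    rw [Matrix.isUnit_iff_isUnit_det]
    by_contra hdet
    rw [isUnit_iff_ne_zero, not_not] at hdet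
    have key : ((t : ℝ)⁻¹ : ℂ) ∈ spectrum ℂ (A.map (Complex.ofReal)) := by
      rw [spectrum.mem_iff]
      rw [Matrix.isUnit_iff_isUnit_det, isUnit_iff_ne_zero, not_not]
      have h1 : (algebraMap ℂ (Matrix (Fin n) (Fin n) ℂ) ((t : ℝ)⁻¹ : ℂ) - A.map Complex.ofReal)
          = ((t⁻¹ • 1 - A).map Complex.ofReal) := by
        ext i j
        simp [Matrix.map, Matrix.algebraMap_matrix_apply, Matrix.one_apply, Matrix.sub_apply]
        split <;> simp
      have h3 : ((t⁻¹ • 1 - A).map Complex.ofReal).det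
          = (Complex.ofRealHom.mapMatrix (t⁻¹ • (1:Matrix (Fin n) (Fin n) ℝ) - A)).det := rfl
      rw [h1, h3, ← RingHom.map_det]
      have h2 : (t⁻¹ • (1 : Matrix (Fin n) (Fin n) ℝ) - A) = t⁻¹ • (1 - t • A) := by
        rw [smul_sub, smul_smul, inv_mul_cancel₀ ht, one_smul]
      rw [h2, Matrix.det_smul, hdet]
      simp
    have := h _ key
    simp at this
  refine ⟨hunit, fun t => ?_⟩
  have hg : HasDerivAt (fun s : ℝ => (1 : Matrix (Fin n) (Fin n) ℝ) - s • A) (-A) t := by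
    have h0 := ((hasDerivAt_id t).smul_const A).const_sub 1
    simp at h0
    exact h0
  have hinv : HasDerivAt (fun s : ℝ => Ring.inverse (1 - s • A))
      ((1 - t • A)⁻¹ * A * (1 - t • A)⁻¹) t := by
    have hf := (hasFDerivAt_ringInverse (𝕜 := ℝ) (hunit t).unit).comp_hasDerivAt t hg
    have e : ((1 - t • A)⁻¹ * A * (1 - t • A)⁻¹) = -((hunit t).unit⁻¹ * -A * (hunit t).unit⁻¹ : Matrix (Fin n) (Fin n) ℝ) := by
      rw [Matrix.coe_units_inv, IsUnit.unit_spec]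
      noncomm_ring
    rw [e]
    exact hf
  have hfinal : HasDerivAt (fun s : ℝ => A * (1 - s • A)⁻¹)
      (A * ((1 - t • A)⁻¹ * A * (1 - t • A)⁻¹)) t := by
    have := hinv.const_mul A
    simp only [Matrix.nonsing_inv_eq_ringInverse] at this ⊢
    exact this
  convert hfinal using 1
  noncomm_ring
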